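/- If G and H are terminating impartial games with equal Grundy sets Γ₁(G) = Γ₁(H), then for every terminating game X, the ordinal sums G : X and H : X have equal Grundy sets: Γ₁(G : X) = Γ₁(H : X). -/

import Mathlib

universe u

/-- Nimbers, as in the older Mathlib: a type synonym of `Ordinal` with its order. -/
def Nimber : Type (u + 1) := Ordinal.{u}

namespace Nimber

noncomputable instance instCCLOBot : ConditionallyCompleteLinearOrderBot Nimber :=
  inferInstanceAs (ConditionallyCompleteLinearOrderBot Ordinal)

instance instWFLT : WellFoundedLT Nimber := inferInstanceAs (WellFoundedLT Ordinal)

instance instWFRel : WellFoundedRelation Nimber := inferInstanceAs (WellFoundedRelation Ordinal)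

end Nimber

namespace SetTheory

/-- Pre-games, as in the older Mathlib. -/
inductive PGame : Type (u + 1)
  | mk : ∀ α β : Type u, (α → PGame) → (β → PGame) → PGame

namespace PGame

def LeftMoves : PGame → Type u
  | mk l _ _ _ => l

def RightMoves : PGame → Type u
  | mk _ r _ _ => r

def moveLeft : ∀ g : PGame, LeftMoves g → PGame
  | mk _ _ L _ => L

def moveRight : ∀ g : PGame, RightMoves g → PGame
  | mk _ _ _ R => R

/-- The pair `(x ≤ y, x ⧏ y)`. -/
noncomputable def leLF : PGame.{u} → PGame.{u} → Prop × Prop :=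
  fun x => PGame.rec (motive := fun _ => PGame.{u} → Prop × Prop)
    (fun _ _ _ _ ihxL ihxR => fun y => PGame.rec (motive := fun _ => Prop × Prop)
      (fun yl yr yL yR ihyL ihyR =>
        ((∀ i, (ihxL i (mk yl yr yL yR)).2) ∧ ∀ j, (ihyR j).2,
         (∃ i, (ihyL i).1) ∨ ∃ j, (ihxR j (mk yl yr yL yR)).1)) y) x

instance instLE : LE PGame := ⟨fun x y => (leLF x y).1⟩

def neg : PGame → PGame
  | mk l r L R => mk r l (fun i => neg (R i)) (fun i => neg (L i))

instance instNeg : Neg PGame := ⟨neg⟩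

def Equiv (x y : PGame) : Prop := x ≤ y ∧ y ≤ x

def ImpartialAux : PGame → Prop
  | mk l r L R => Equiv (mk l r L R) (-(mk l r L R)) ∧ (∀ i, ImpartialAux (L i)) ∧
      ∀ j, ImpartialAux (R j)

class Impartial (G : PGame) : Prop where
  out : ImpartialAux G

/-- The Grundy value: the mex of the Grundy values of the left options. -/
noncomputable def grundyValue : PGame.{u} → Nimber.{u}
  | mk _ _ L _ => sInf (Set.range fun i => grundyValue (L i))ᶜ

end PGame

end SetTheory

open SetTheory PGame Nimber

/-- The ordinal sum `G : H` of games: its options are `G : H'` for options `H'` of `H`,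
and `G'` for options `G'` of `G` (discarding `H`). -/
def osum (G : PGame) : PGame → PGame
  | PGame.mk l r L R =>
    PGame.mk (G.LeftMoves ⊕ l) (G.RightMoves ⊕ r)
      (Sum.elim G.moveLeft fun j => osum G (L j))
      (Sum.elim G.moveRight fun j => osum G (R j))

/-- The Grundy set `Γ₁(G)`: the set of Grundy numbers of the options of `G`. -/
def grundySet (G : PGame) : Set Nimber :=
  Set.range fun i => grundyValue (G.moveLeft i)

/-- The ρ-th excluded ordinal of a set `Λ`:
`ex_ρ(Λ) = mex (Λ ∪ { ex_μ(Λ) | μ < ρ })`, where `mex` is the minimal excludant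
(least element of the complement). -/
noncomputable def exc (Λ : Set Nimber) : Nimber → Nimber := fun ρ =>
  sInf {a | a ∉ Λ ∧ ∀ μ < ρ, exc Λ μ ≠ a}
termination_by ρ => ρ

theorem SetTheory.PGame.moveLeft_mk {xl xr : Type u} {xL : xl → PGame.{u}} {xR : xr → PGame.{u}} :
    (PGame.mk xl xr xL xR).moveLeft = xL := rfl

lemma grundyValue_eq_grundySet' (G : PGame) : grundyValue G = sInf (grundySet G)ᶜ := by
  cases G; rw [grundyValue]; rfl

lemma grundySet_osum_aux (G H : PGame) (h : grundySet G = grundySet H) :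
    ∀ X : PGame, grundySet (osum G X) = grundySet (osum H X)
  | PGame.mk l r L R => by
    have ih : ∀ j, grundyValue (osum G (L j)) = grundyValue (osum H (L j)) := fun j => by
      rw [grundyValue_eq_grundySet', grundyValue_eq_grundySet',
        grundySet_osum_aux G H h (L j)]
    rw [osum, osum, grundySet, grundySet]
    ext x
    simp only [Set.mem_range, PGame.moveLeft_mk]
    constructor
    · rintro ⟨(i | j), rfl⟩
      · obtain ⟨i', hi'⟩ : grundyValue (G.moveLeft i) ∈ grundySet H := h ▸ ⟨i, rfl⟩
        exact ⟨Sum.inl i', hi'⟩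
      · exact ⟨Sum.inr j, (ih j).symm⟩
    · rintro ⟨(i | j), rfl⟩
      · obtain ⟨i', hi'⟩ : grundyValue (H.moveLeft i) ∈ grundySet G := h ▸ ⟨i, rfl⟩
        exact ⟨Sum.inl i', hi'⟩
      · exact ⟨Sum.inr j, ih j⟩

/-- if `Γ₁(G) = Γ₁(H)` then `Γ₁(G : X) = Γ₁(H : X)` for every
terminating impartial game `X`. -/
theorem grundySet_osum_congr_left (G H : PGame) [G.Impartial] [H.Impartial]
    (h : grundySet G = grundySet H) :
    ∀ X : PGame, X.Impartial → grundySet (osum G X) = grundySet (osum H X) :=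
  fun X _ => grundySet_osum_aux G H h X
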